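/- Viewing $\Lambda_2$ as a function of $\omega$ (with $\alpha$ fixed), $\Lambda_2(\omega) = \int_{-\infty}^{\infty} R_0(s;\omega)^2\,ds$ is differentiable and strictly increasing: $\frac{d}{d\omega}\Lambda_2(\omega) > 0$ for all $\omega$ with $0 \le \beta(\omega) < 1$. -/

import Mathlib

open MeasureTheory

section StmtAux

open Real Filter Topology


section aux
variable {b p : ℝ}

lemma my_cosh_ge (y : ℝ) : 1 + y^2/4 ≤ Real.cosh y := by
  have h1 := Real.quadratic_le_exp_of_nonneg (abs_nonneg y)
  have h2 := Real.add_one_le_exp (-|y|)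
  have h3 : Real.cosh y = (Real.exp |y| + Real.exp (-|y|))/2 := by
    rw [← Real.cosh_abs, Real.cosh_eq]
  nlinarith [sq_abs y]

lemma my_sinh_bound (t : ℝ) : Real.sinh t < Real.cosh t ∧ -Real.cosh t < Real.sinh t := by
  constructor <;> nlinarith [Real.cosh_pos t, Real.cosh_sq_sub_sinh_sq t]

-- derivative of s ↦ cosh (p*s), sinh (p*s)
lemma hd_cosh (p s : ℝ) : HasDerivAt (fun s : ℝ => Real.cosh (p*s)) (p * Real.sinh (p*s)) s := by
  have hps : HasDerivAt (fun s : ℝ => p*s) p s := by simpa using (hasDerivAt_id s).const_mul p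
  exact ((Real.hasDerivAt_cosh (p*s)).comp s hps).congr_deriv (by ring)

lemma hd_sinh (p s : ℝ) : HasDerivAt (fun s : ℝ => Real.sinh (p*s)) (p * Real.cosh (p*s)) s := by
  have hps : HasDerivAt (fun s : ℝ => p*s) p s := by simpa using (hasDerivAt_id s).const_mul p
  exact ((Real.hasDerivAt_sinh (p*s)).comp s hps).congr_deriv (by ring)

lemma my_integrable (b p : ℝ) (hb0 : 0 < b) (hp : 0 < p) :
    Integrable (fun s : ℝ => 4*p^2 / (1 + b * Real.cosh (2*p*s))) := by
  have hden : ∀ s : ℝ, 0 < 1 + b * Real.cosh (2*p*s) := fun s =>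
    by nlinarith [Real.one_le_cosh (2*p*s)]
  have hg : Integrable (fun s : ℝ => (4*p^2/b) * (1 + (p*s)^2)⁻¹) :=
    (integrable_inv_one_add_sq.comp_mul_left' (ne_of_gt hp)).const_mul _
  refine hg.mono ?_ ?_
  · exact (continuous_const.div (by continuity) (fun s => ne_of_gt (hden s))).aestronglyMeasurable
  · refine Filter.Eventually.of_forall (fun s => ?_)
    have h1 : b * (1 + (p*s)^2) ≤ 1 + b * Real.cosh (2*p*s) := by
      nlinarith [my_cosh_ge (2*p*s)]
    have h2 : 0 < b * (1 + (p*s)^2) := by positivity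
    rw [Real.norm_eq_abs, Real.norm_eq_abs,
      abs_of_nonneg (le_of_lt (div_pos (by positivity) (hden s))),
      abs_of_nonneg (by positivity)]
    calc 4*p^2 / (1 + b * Real.cosh (2*p*s)) ≤ 4*p^2 / (b * (1 + (p*s)^2)) :=
          div_le_div_of_nonneg_left (by positivity) h2 h1
      _ = (4*p^2/b) * (1 + (p*s)^2)⁻¹ := by field_simp

end aux

lemma key (b p : ℝ) (hb0 : 0 < b) (hb1 : b < 1) (hp : 0 < p) :
    (∫ s : ℝ, 4*p^2 / (1 + b * Real.cosh (2*p*s))) =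
      (4*p / Real.sqrt (1-b^2)) *
        (Real.log (Real.sqrt ((1+b)/(1-b)) + 1) - Real.log (Real.sqrt ((1+b)/(1-b)) - 1)) := by
  have h1b : (0:ℝ) < 1 - b := by linarith
  have h1b' : (0:ℝ) < 1 + b := by linarith
  set d := Real.sqrt (1-b^2) with hd_def
  set k := Real.sqrt ((1+b)/(1-b)) with hk_def
  have hd2 : d^2 = 1-b^2 := Real.sq_sqrt (by nlinarith)
  have hd0 : 0 < d := Real.sqrt_pos.mpr (by nlinarith)
  have hk2 : k^2 = (1+b)/(1-b) := Real.sq_sqrt (by positivity)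
  have hk2m : k^2*(1-b) = 1+b := by rw [hk2]; field_simp
  have hk1 : 1 < k := by nlinarith [Real.sqrt_nonneg ((1+b)/(1-b))]
  have hkd : k * d = 1 + b := by
    rw [hk_def, hd_def, ← Real.sqrt_mul (by positivity)]
    rw [show (1+b)/(1-b)*(1-b^2) = (1+b)^2 by field_simp; ring]
    exact Real.sqrt_sq (by positivity)
  have hk1b : k * (1-b) = d := by
    rw [hk_def, hd_def, ← Real.sqrt_sq h1b.le, ← Real.sqrt_mul (by positivity)]
    congr 1; rw [Real.sqrt_sq h1b.le, div_mul_eq_mul_div, eq_comm, eq_div_iff h1b.ne']; ring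
  set K := 4*p/d with hK_def
  set A : ℝ → ℝ := fun s => k * Real.cosh (p*s) + Real.sinh (p*s) with hA_def
  set B : ℝ → ℝ := fun s => k * Real.cosh (p*s) - Real.sinh (p*s) with hB_def
  have hApos : ∀ s, 0 < A s := fun s => by
    have := my_sinh_bound (p*s); have := Real.cosh_pos (p*s)
    simp only [hA_def]; nlinarith
  have hBpos : ∀ s, 0 < B s := fun s => by
    have := my_sinh_bound (p*s); have := Real.cosh_pos (p*s)
    simp only [hB_def]; nlinarith
  set F : ℝ → ℝ := fun s => K/2 * (Real.log (A s) - Real.log (B s)) with hF_def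
  have hden : ∀ s, 0 < 1 + b * Real.cosh (2*p*s) := fun s => by
    nlinarith [Real.one_le_cosh (2*p*s)]
  -- derivative
  have hF' : ∀ s : ℝ, HasDerivAt F (4*p^2 / (1 + b * Real.cosh (2*p*s))) s := by
    intro s
    set C := Real.cosh (p*s)
    set S := Real.sinh (p*s)
    have hA' : HasDerivAt A (k*(p*S) + p*C) s := ((hd_cosh p s).const_mul k).add (hd_sinh p s)
    have hB' : HasDerivAt B (k*(p*S) - p*C) s := ((hd_cosh p s).const_mul k).sub (hd_sinh p s)
    have hlogA : HasDerivAt (fun s => Real.log (A s)) ((A s)⁻¹ * (k*(p*S) + p*C)) s :=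
      (Real.hasDerivAt_log (ne_of_gt (hApos s))).comp s hA'
    have hlogB : HasDerivAt (fun s => Real.log (B s)) ((B s)⁻¹ * (k*(p*S) - p*C)) s :=
      (Real.hasDerivAt_log (ne_of_gt (hBpos s))).comp s hB'
    have hcomb := (hlogA.sub hlogB).const_mul (K/2)
    refine hcomb.congr_deriv ?_; symm
    have hCS : C^2 - S^2 = 1 := Real.cosh_sq_sub_sinh_sq (p*s)
    have hc2 : Real.cosh (2*p*s) = 2*C^2 - 1 := by
      rw [show 2*p*s = 2*(p*s) by ring, Real.cosh_two_mul]
      linear_combination -hCS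
    have hAB : A s * B s = (1 + b*(2*C^2-1))/(1-b) := by
      simp only [hA_def, hB_def]
      field_simp
      linear_combination C^2*hk2m + (1-b)*hCS
    have hA0 : A s ≠ 0 := ne_of_gt (hApos s)
    have hB0 : B s ≠ 0 := ne_of_gt (hBpos s)
    have hden' : (0:ℝ) < 1 + b*(2*C^2-1) := by rw [← hc2]; exact hden s
    rw [hc2]
    rw [show K/2 * ((A s)⁻¹ * (k*(p*S) + p*C) - (B s)⁻¹ * (k*(p*S) - p*C))
        = K/2 * (((k*(p*S) + p*C) * B s - A s * (k*(p*S) - p*C)) / (A s * B s)) by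
      rw [inv_mul_eq_div, inv_mul_eq_div, div_sub_div _ _ hA0 hB0]]
    have hnum : (k*(p*S) + p*C) * B s - A s * (k*(p*S) - p*C) = 2*p*k*(C^2 - S^2) := by
      simp only [hA_def, hB_def]; ring
    rw [hnum, hCS, hAB, hK_def]
    rw [show 2*p*k*1/((1 + b*(2*C^2-1))/(1-b)) = 2*p*(k*(1-b))/(1 + b*(2*C^2-1)) by
      rw [div_div_eq_mul_div]; congr 1; ring]
    rw [hk1b]
    field_simp
  -- ratio identity
  have hAB_id : ∀ s : ℝ, A s / B s =
      ((k+1) + (k-1)*Real.exp (-(2*p)*s)) / ((k-1) + (k+1)*Real.exp (-(2*p)*s)) := by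
    intro s
    have hE : Real.exp (p*s) ≠ 0 := Real.exp_ne_zero _
    have he2 : Real.exp (-(2*p)*s) = ((Real.exp (p*s))⁻¹)^2 := by
      rw [pow_two, ← Real.exp_neg, ← Real.exp_add]; congr 1; ring
    have hX : 0 < (k-1) + (k+1)*Real.exp (-(2*p)*s) := by
      have : (0:ℝ) < k - 1 := by linarith
      positivity
    rw [div_eq_div_iff (ne_of_gt (hBpos s)) (ne_of_gt hX)]
    simp only [hA_def, hB_def, Real.cosh_eq, Real.sinh_eq, he2]
    rw [Real.exp_neg]
    field_simp
    ring
  have hXtop : Tendsto (fun s : ℝ => Real.exp (-(2*p)*s)) atTop (𝓝 0) := by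
    apply Real.tendsto_exp_atBot.comp
    have h2p : Tendsto (fun s : ℝ => (2*p)*s) atTop atTop :=
      Tendsto.const_mul_atTop (by positivity) tendsto_id
    have := tendsto_neg_atTop_atBot.comp h2p
    refine this.congr (fun s => ?_)
    simp [Function.comp, neg_mul]
  have hk1' : (0:ℝ) < k - 1 := by linarith
  have hratio : Tendsto (fun s => A s / B s) atTop (𝓝 ((k+1)/(k-1))) := by
    have hnum := (hXtop.const_mul (k-1)).const_add (k+1)
    have hden2 := (hXtop.const_mul (k+1)).const_add (k-1)
    have hdiv := hnum.div hden2 (by simpa using ne_of_gt hk1')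
    simp only [mul_zero, add_zero] at hdiv
    exact hdiv.congr (fun s => (hAB_id s).symm)
  set L := K/2 * Real.log ((k+1)/(k-1)) with hL
  have hpos_ratio : (0:ℝ) < (k+1)/(k-1) := by positivity
  have hFtop : Tendsto F atTop (𝓝 L) := by
    have h1 : Tendsto (fun s => Real.log (A s / B s)) atTop
        (𝓝 (Real.log ((k+1)/(k-1)))) :=
      (Real.continuousAt_log (ne_of_gt hpos_ratio)).tendsto.comp hratio
    have h2 := h1.const_mul (K/2)
    exact h2.congr (fun s => by
      rw [Real.log_div (ne_of_gt (hApos s)) (ne_of_gt (hBpos s))])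
  have hodd : ∀ s : ℝ, F (-s) = - F s := by
    intro s
    simp only [hF_def, hA_def, hB_def]
    rw [show p*(-s) = -(p*s) by ring, Real.cosh_neg, Real.sinh_neg]
    ring
  have hFbot : Tendsto F atBot (𝓝 (-L)) := by
    have h1 : Tendsto (fun s => F (-s)) atBot (𝓝 L) := hFtop.comp tendsto_neg_atBot_atTop
    have h2 : Tendsto (fun s => - F s) atBot (𝓝 L) := h1.congr hodd
    simpa using h2.neg
  have hint : Integrable (fun s : ℝ => 4*p^2/(1 + b*Real.cosh (2*p*s))) :=
    my_integrable b p hb0 hp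
  have hval := integral_of_hasDerivAt_of_tendsto
    (f' := fun s => 4*p^2/(1 + b*Real.cosh (2*p*s))) hF' hint hFbot hFtop
  rw [hval, hL, hK_def,
    Real.log_div (by positivity) (ne_of_gt hk1')]
  ring

lemma key0 (p : ℝ) (hp : 0 < p) :
    (∫ s : ℝ, 4*p^2 / (1 + Real.cosh (2*p*s))) = 4*p := by
  set F : ℝ → ℝ := fun s => 2*p * (Real.sinh (p*s) / Real.cosh (p*s)) with hF_def
  have hF' : ∀ s : ℝ, HasDerivAt F (4*p^2/(1 + Real.cosh (2*p*s))) s := by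
    intro s
    have hC := Real.cosh_pos (p*s)
    have h := ((hd_sinh p s).div (hd_cosh p s) (ne_of_gt hC)).const_mul (2*p)
    refine h.congr_deriv ?_; symm
    have hCS := Real.cosh_sq_sub_sinh_sq (p*s)
    have hc2 : Real.cosh (2*p*s) = 2*Real.cosh (p*s)^2 - 1 := by
      rw [show 2*p*s = 2*(p*s) by ring, Real.cosh_two_mul]; linear_combination -hCS
    rw [hc2]
    have hC0 : Real.cosh (p*s) ≠ 0 := ne_of_gt hC
    field_simp
    linear_combination (-4*Real.cosh (p*s)^2)*hCS
  have hXtop : Tendsto (fun s : ℝ => Real.exp (-(2*p)*s)) atTop (𝓝 0) := by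
    apply Real.tendsto_exp_atBot.comp
    have h2p : Tendsto (fun s : ℝ => (2*p)*s) atTop atTop :=
      Tendsto.const_mul_atTop (by positivity) tendsto_id
    have := tendsto_neg_atTop_atBot.comp h2p
    refine this.congr (fun s => ?_)
    simp [Function.comp, neg_mul]
  have hid : ∀ s : ℝ, Real.sinh (p*s)/Real.cosh (p*s)
      = (1 - Real.exp (-(2*p)*s))/(1 + Real.exp (-(2*p)*s)) := by
    intro s
    have hE : Real.exp (p*s) ≠ 0 := Real.exp_ne_zero _
    have he2 : Real.exp (-(2*p)*s) = ((Real.exp (p*s))⁻¹)^2 := by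
      rw [pow_two, ← Real.exp_neg, ← Real.exp_add]; congr 1; ring
    rw [div_eq_div_iff (ne_of_gt (Real.cosh_pos _)) (by positivity)]
    rw [Real.sinh_eq, Real.cosh_eq, he2, Real.exp_neg]
    field_simp
  have hFtop : Tendsto F atTop (𝓝 (2*p)) := by
    have hnum := (hXtop.neg.const_add 1)
    have hden2 := (hXtop.const_add 1)
    have hdiv := hnum.div hden2 (by simp)
    simp only [neg_zero, add_zero] at hdiv
    have h2 := hdiv.const_mul (2*p)
    simp only [div_one, sub_zero, mul_one] at h2
    refine h2.congr (fun s => ?_)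
    simp only [hF_def, Pi.div_apply, hid s]
    ring
  have hodd : ∀ s : ℝ, F (-s) = - F s := by
    intro s
    simp only [hF_def]
    rw [show p*(-s) = -(p*s) by ring, Real.cosh_neg, Real.sinh_neg]
    ring
  have hFbot : Tendsto F atBot (𝓝 (-(2*p))) := by
    have h1 : Tendsto (fun s => F (-s)) atBot (𝓝 (2*p)) := hFtop.comp tendsto_neg_atBot_atTop
    have h2 : Tendsto (fun s => - F s) atBot (𝓝 (2*p)) := h1.congr hodd
    simpa using h2.neg
  have hint : Integrable (fun s : ℝ => 4*p^2/(1 + Real.cosh (2*p*s))) := by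
    have := my_integrable 1 p one_pos hp
    simpa using this
  have hval := integral_of_hasDerivAt_of_tendsto
    (f' := fun s => 4*p^2/(1 + Real.cosh (2*p*s))) hF' hint hFbot hFtop
  rw [hval]
  ring

end StmtAux

open Real Filter Topology in
/-- With `α` fixed, `Λ₂(ω) = ∫ R₀(s;ω)² ds` is differentiable and
strictly increasing (`dΛ₂/dω > 0`) for all `ω > 0` with `0 ≤ β(ω) < 1`, where
`β(ω) = -16αω/3`. -/
theorem stmt17 (α : ℝ)
    (R0 : ℝ → ℝ → ℝ)
    (hR0 : ∀ ω z : ℝ, R0 ω z =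
      Real.sqrt (4 * ω / (1 + Real.sqrt (1 - (-(16 / 3) * α * ω))
        * Real.cosh (2 * Real.sqrt ω * z))))
    (Λ2 : ℝ → ℝ)
    (hΛ2 : ∀ ω : ℝ, Λ2 ω = ∫ s : ℝ, (R0 ω s) ^ 2) :
    ∀ ω : ℝ, 0 < ω → 0 ≤ -(16 / 3) * α * ω → -(16 / 3) * α * ω < 1 →
      DifferentiableAt ℝ Λ2 ω ∧ 0 < deriv Λ2 ω := by
  intro ω hω hβ0 hβ1
  set c : ℝ := -(16/3)*α with hc_def
  have hc0 : 0 ≤ c := by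
    by_contra h
    push_neg at h
    nlinarith [mul_pos (neg_pos.mpr h) hω]
  rcases eq_or_lt_of_le hc0 with hc | hc
  · -- c = 0
    have h_eq : Set.EqOn Λ2 (fun w => 4 * Real.sqrt w) (Set.Ioi 0) := by
      intro w hw
      have hw0 : (0:ℝ) < w := hw
      have hsw : 0 < Real.sqrt w := Real.sqrt_pos.mpr hw0
      rw [hΛ2 w]
      have hptw : (fun s : ℝ => (R0 w s)^2)
          = fun s => 4*(Real.sqrt w)^2/(1 + Real.cosh (2*Real.sqrt w*s)) := by
        funext s
        rw [hR0 w s, ← hc]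
        have hden : (0:ℝ) < 1 + Real.cosh (2*Real.sqrt w*s) := by
          nlinarith [Real.one_le_cosh (2*Real.sqrt w*s)]
        rw [show (1:ℝ) - 0*w = 1 by ring, Real.sqrt_one, one_mul,
          Real.sq_sqrt (by positivity), Real.sq_sqrt hw0.le]
      rw [hptw, key0 (Real.sqrt w) hsw]
    have hev : Λ2 =ᶠ[𝓝 ω] fun w => 4 * Real.sqrt w :=
      Filter.eventuallyEq_of_mem (Ioi_mem_nhds hω) h_eq
    have hda : HasDerivAt (fun w => 4 * Real.sqrt w) (4 * (1/(2*Real.sqrt ω))) ω := by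
      simpa [mul_comm] using (Real.hasDerivAt_sqrt (ne_of_gt hω)).const_mul 4
    have hΛda : HasDerivAt Λ2 (4 * (1/(2*Real.sqrt ω))) ω := hda.congr_of_eventuallyEq hev
    have hsω : 0 < Real.sqrt ω := Real.sqrt_pos.mpr hω
    exact ⟨hΛda.differentiableAt, by rw [hΛda.deriv]; positivity⟩
  · -- 0 < c
    set U : Set ℝ := {w : ℝ | 0 < w} ∩ {w : ℝ | c*w < 1} with hU_def
    have hUopen : IsOpen U :=
      (isOpen_lt continuous_const continuous_id).inter
        (isOpen_lt (continuous_const.mul continuous_id) continuous_const)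
    have hωU : ω ∈ U := ⟨hω, hβ1⟩
    set kk : ℝ → ℝ := fun w =>
      Real.sqrt ((1 + Real.sqrt (1-c*w))/(1 - Real.sqrt (1-c*w))) with hkk_def
    set g : ℝ → ℝ := fun w =>
      (4/Real.sqrt c) * (Real.log (kk w + 1) - Real.log (kk w - 1)) with hg_def
    have h_eq : Set.EqOn Λ2 g U := by
      intro w hw
      obtain ⟨hw0, hw1⟩ := hw
      have hw0 : (0:ℝ) < w := hw0
      have hcw : 0 < c*w := mul_pos hc hw0
      have h1cw : 0 < 1 - c*w := by simp only [Set.mem_setOf_eq] at hw1; linarith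
      set b : ℝ := Real.sqrt (1-c*w) with hb_def
      have hb2 : b^2 = 1 - c*w := Real.sq_sqrt h1cw.le
      have hb0 : 0 < b := Real.sqrt_pos.mpr h1cw
      have hb1 : b < 1 := by nlinarith
      have hsw : 0 < Real.sqrt w := Real.sqrt_pos.mpr hw0
      rw [hΛ2 w]
      have hptw : (fun s : ℝ => (R0 w s)^2)
          = fun s => 4*(Real.sqrt w)^2/(1 + b * Real.cosh (2*Real.sqrt w*s)) := by
        funext s
        rw [hR0 w s]
        have hden : (0:ℝ) < 1 + b * Real.cosh (2*Real.sqrt w*s) := by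
          nlinarith [Real.one_le_cosh (2*Real.sqrt w*s)]
        rw [Real.sq_sqrt (by positivity), Real.sq_sqrt hw0.le]
      rw [hptw, key b (Real.sqrt w) hb0 hb1 hsw]
      have h1b2 : 1 - b^2 = c*w := by rw [hb2]; ring
      rw [h1b2, Real.sqrt_mul hc.le w,
        mul_div_mul_right _ _ (ne_of_gt hsw)]
    have hUnhds : U ∈ 𝓝 ω := hUopen.mem_nhds hωU
    have hev : Λ2 =ᶠ[𝓝 ω] g := Filter.eventuallyEq_of_mem hUnhds h_eq
    -- derivative of g at ω
    have h1cω : 0 < 1 - c*ω := by linarith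
    set b₀ : ℝ := Real.sqrt (1-c*ω) with hb₀_def
    have hb₀2 : b₀^2 = 1 - c*ω := Real.sq_sqrt h1cω.le
    have hb₀0 : 0 < b₀ := Real.sqrt_pos.mpr h1cω
    have hb₀1 : b₀ < 1 := by nlinarith [mul_pos hc hω]
    have h1b₀ : 0 < 1 - b₀ := by linarith
    have hrpos : 0 < (1 + b₀)/(1 - b₀) := by positivity
    set k₀ : ℝ := Real.sqrt ((1 + b₀)/(1 - b₀)) with hk₀_def
    have hk₀2 : k₀^2 = (1 + b₀)/(1 - b₀) := Real.sq_sqrt hrpos.le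
    have hq1 : 1 < (1 + b₀)/(1 - b₀) := by rw [lt_div_iff₀ h1b₀]; nlinarith
    have hk₀1 : 1 < k₀ := by
      nlinarith [Real.sqrt_nonneg ((1 + b₀)/(1 - b₀)), hk₀2, hq1]
    have h_id : HasDerivAt (fun w : ℝ => c*w) c ω := by
      simpa using (hasDerivAt_id ω).const_mul c
    have hB : HasDerivAt (fun w : ℝ => 1 - c*w) (-c) ω := h_id.const_sub 1
    set bd : ℝ := 1/(2*b₀) * (-c) with hbd_def
    have hb : HasDerivAt (fun w : ℝ => Real.sqrt (1-c*w)) bd ω :=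
      (Real.hasDerivAt_sqrt (ne_of_gt h1cω)).comp ω hB
    have hnum : HasDerivAt (fun w : ℝ => 1 + Real.sqrt (1-c*w)) bd ω := hb.const_add 1
    have hden : HasDerivAt (fun w : ℝ => 1 - Real.sqrt (1-c*w)) (-bd) ω := hb.const_sub 1
    set r' : ℝ := (bd*(1 - b₀) - (1 + b₀)*(-bd))/(1 - b₀)^2 with hr'_def
    have hr : HasDerivAt (fun w : ℝ => (1 + Real.sqrt (1-c*w))/(1 - Real.sqrt (1-c*w))) r' ω :=
      hnum.div hden (ne_of_gt h1b₀)
    set k' : ℝ := 1/(2*k₀) * r' with hk'_def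
    have hkk : HasDerivAt kk k' ω :=
      (Real.hasDerivAt_sqrt (ne_of_gt hrpos)).comp ω hr
    have hkkω : kk ω = k₀ := rfl
    have hlog1 : HasDerivAt (fun w => Real.log (kk w + 1)) ((k₀+1)⁻¹ * k') ω := by
      have h := (Real.hasDerivAt_log (x := k₀+1) (by positivity)).comp ω (hkk.add_const 1)
      exact h
    have hlog2 : HasDerivAt (fun w => Real.log (kk w - 1)) ((k₀-1)⁻¹ * k') ω := by
      have h := (Real.hasDerivAt_log (x := k₀-1)
        (ne_of_gt (by linarith))).comp ω (hkk.sub_const 1)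
      exact h
    have hg' : HasDerivAt g ((4/Real.sqrt c) * ((k₀+1)⁻¹ * k' - (k₀-1)⁻¹ * k')) ω :=
      (hlog1.sub hlog2).const_mul _
    have hbdneg : bd < 0 := by
      rw [hbd_def]
      apply mul_neg_of_pos_of_neg (by positivity) (by linarith)
    have hr'neg : r' < 0 := by
      rw [hr'_def]
      apply div_neg_of_neg_of_pos (by nlinarith) (by positivity)
    have hk'neg : k' < 0 := by
      rw [hk'_def]
      exact mul_neg_of_pos_of_neg (by positivity) hr'neg
    have hsub : (k₀+1)⁻¹ - (k₀-1)⁻¹ < 0 := by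
      have h1 : (0:ℝ) < k₀ - 1 := by linarith
      have h2 : (k₀+1)⁻¹ < (k₀-1)⁻¹ := by
        apply inv_strictAnti₀ h1 (by linarith)
      linarith
    have hD : 0 < (4/Real.sqrt c) * ((k₀+1)⁻¹ * k' - (k₀-1)⁻¹ * k') := by
      have hcs : 0 < Real.sqrt c := Real.sqrt_pos.mpr hc
      apply mul_pos (by positivity)
      have : (k₀+1)⁻¹ * k' - (k₀-1)⁻¹ * k' = k' * ((k₀+1)⁻¹ - (k₀-1)⁻¹) := by ring
      rw [this]
      exact mul_pos_of_neg_of_neg hk'neg hsub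
    have hΛda : HasDerivAt Λ2 ((4/Real.sqrt c) * ((k₀+1)⁻¹ * k' - (k₀-1)⁻¹ * k')) ω :=
      hg'.congr_of_eventuallyEq hev
    exact ⟨hΛda.differentiableAt, by rw [hΛda.deriv]; exact hD⟩
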